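/- Let r ≥ 2 and let S_2 ⊆ F_2^2 × F_2^r be the set S_2 = {((0,0), 0_r)} ∪ {((0,1), h) : h ∈ F_2^r, h ≠ 0} ∪ {((1,0), 0_r), ((1,1), 0_r)} (the set of columns of the parity-check matrix H_2 built from the extended Hamming code). Let A be the matrix over F_2 with rows and columns indexed by F_2^2 × F_2^r, with A_{x,y} = 1 if x + y ∈ S_2 and 0 otherwise. Then the rank of A over F_2 is at most 2^r + 4. -/

import Mathlib

/-- Membership in the generator set `S₂`: the set of columns of the parity-check
matrix `H₂` built from the extended Hamming code. -/
def inS2 {r : ℕ} (p : (ZMod 2 × ZMod 2) × (Fin r → ZMod 2)) : Prop :=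
  (p.1 = (0, 0) ∧ p.2 = 0) ∨ (p.1 = (0, 1) ∧ p.2 ≠ 0) ∨
  (p.1 = (1, 0) ∧ p.2 = 0) ∨ (p.1 = (1, 1) ∧ p.2 = 0)

instance {r : ℕ} (p : (ZMod 2 × ZMod 2) × (Fin r → ZMod 2)) : Decidable (inS2 p) := by
  unfold inS2; infer_instance

lemma inS2_split {r : ℕ} (p : (ZMod 2 × ZMod 2) × (Fin r → ZMod 2)) :
    (if inS2 p then (1 : ZMod 2) else 0) =
      (if p.1 = ((0 : ZMod 2), (1 : ZMod 2)) then 1 else 0) +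
      (if p.2 = 0 then 1 else 0) := by
  obtain ⟨⟨a, b⟩, w⟩ := p
  by_cases hw : w = 0 <;> fin_cases a <;> fin_cases b <;>
    simp [inS2, hw, Prod.ext_iff] <;> simp (config := {decide := true}) [hw]

lemma matrix_rank_add_le {n m : Type*} [Fintype n] [Fintype m] [DecidableEq n]
    (A B : Matrix m n (ZMod 2)) : (A + B).rank ≤ A.rank + B.rank := by
  unfold Matrix.rank
  rw [Matrix.mulVecLin_add]
  refine le_trans (Submodule.finrank_mono ?_) (le_trans
    (Submodule.finrank_add_le_finrank_add_finrank _ _) le_rfl)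
  rintro x ⟨y, rfl⟩
  exact Submodule.mem_sup.2 ⟨A.mulVecLin y, LinearMap.mem_range_self _ _,
    B.mulVecLin y, LinearMap.mem_range_self _ _, rfl⟩

theorem rank_H2_coset_graph (r : ℕ) (hr : 2 ≤ r)
    (A : Matrix ((ZMod 2 × ZMod 2) × (Fin r → ZMod 2))
         ((ZMod 2 × ZMod 2) × (Fin r → ZMod 2)) (ZMod 2))
    (hA : ∀ x y, A x y = if inS2 (x + y) then 1 else 0) :
    A.rank ≤ 2 ^ r + 4 := by
  -- factor matrices
  let P : Matrix ((ZMod 2 × ZMod 2) × (Fin r → ZMod 2)) (ZMod 2 × ZMod 2) (ZMod 2) := fun x c => if x.1 = c then 1 else 0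
  let Q : Matrix (ZMod 2 × ZMod 2) ((ZMod 2 × ZMod 2) × (Fin r → ZMod 2)) (ZMod 2) :=
    fun c y => if c + y.1 = ((0 : ZMod 2), (1 : ZMod 2)) then 1 else 0
  let P' : Matrix ((ZMod 2 × ZMod 2) × (Fin r → ZMod 2)) (Fin r → ZMod 2) (ZMod 2) := fun x w => if x.2 = w then 1 else 0
  let Q' : Matrix (Fin r → ZMod 2) ((ZMod 2 × ZMod 2) × (Fin r → ZMod 2)) (ZMod 2) := fun w y => if w + y.2 = 0 then 1 else 0
  have hEq : A = P * Q + P' * Q' := by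
    ext x y
    rw [hA x y, inS2_split]
    simp only [Matrix.add_apply, Matrix.mul_apply, P, Q, P', Q', ite_mul, one_mul, zero_mul,
      Finset.sum_ite_eq, Finset.mem_univ, if_true]
    show _ = (P * Q) x y + (P' * Q') x y
    rw [Matrix.mul_apply, Matrix.mul_apply]
    simp only [P, Q, P', Q', ite_mul, one_mul, zero_mul, Finset.sum_ite_eq, Finset.mem_univ, if_true]
    rfl
  calc A.rank ≤ (P * Q).rank + (P' * Q').rank := by rw [hEq]; exact matrix_rank_add_le _ _
    _ ≤ 2 ^ r + 4 := by
        have h1 : (P * Q).rank ≤ 4 := by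
          refine le_trans (Matrix.rank_mul_le_left P Q) ?_
          simpa using Matrix.rank_le_card_width P
        have h2 : (P' * Q').rank ≤ 2 ^ r := by
          refine le_trans (Matrix.rank_mul_le_left P' Q') ?_
          simpa using Matrix.rank_le_card_width P'
        omega
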